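/- The holomorphic Jacobi theta function with characteristics θ[α;β](τ) := ∑_{n∈ℤ} exp(iπ(n+α)²τ) exp(2πi(n+α)β) admits the product representation θ[α;β](τ) = η(τ) e^{2πiαβ} q^{α²/2 − 1/24} ∏_{k≥1}(1 + q^{k+α−1/2} e^{2πiβ})(1 + q^{k−α−1/2} e^{−2πiβ}) where q = e^{2πiτ}, for τ in the upper half-plane and real α, β. -/

import Mathlib

open Complex

/-- `q^x := exp(2πiτx)` for a real exponent `x`. -/
noncomputable def qpow (τ : ℂ) (x : ℝ) : ℂ :=
  Complex.exp (2 * (Real.pi : ℂ) * Complex.I * τ * (x : ℂ))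

/-- The Dedekind eta function `η(τ) = q^{1/24} ∏_{k≥1} (1 − q^k)`. -/
noncomputable def dedekindEta (τ : ℂ) : ℂ :=
  qpow τ (1 / 24) * ∏' k : ℕ, (1 - qpow τ ((k : ℝ) + 1))

open Complex Finset Filter Topology

namespace JTP

/-- partial q-factorial `∏_{i=1}^m (1 - Q^i)` -/
noncomputable def JF (Q : ℂ) (m : ℕ) : ℂ := ∏ i ∈ Finset.range m, (1 - Q ^ (i + 1))

/-- Gaussian binomial `[m, r]_Q`, extended by 0 outside `0 ≤ r ≤ m`. -/
noncomputable def JB (Q : ℂ) (m : ℕ) (r : ℤ) : ℂ :=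
  if 0 ≤ r ∧ r ≤ m then JF Q m / (JF Q r.toNat * JF Q (m - r.toNat)) else 0

variable {Q : ℂ}

lemma one_sub_pow_ne (hQ : ‖Q‖ < 1) (i : ℕ) : 1 - Q ^ (i + 1) ≠ 0 := by
  intro h
  have h2 : Q ^ (i + 1) = 1 := by linear_combination -h
  have := norm_pow Q (i+1) ▸ congrArg norm h2
  have hl : ‖Q‖ ^ (i+1) < 1 := pow_lt_one₀ (norm_nonneg Q) hQ (Nat.succ_ne_zero i)
  rw [this] at hl; norm_num at hl

lemma JF_ne (hQ : ‖Q‖ < 1) (m : ℕ) : JF Q m ≠ 0 :=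
  Finset.prod_ne_zero_iff.2 fun i _ => one_sub_pow_ne hQ i

lemma JF_succ (m : ℕ) : JF Q (m + 1) = JF Q m * (1 - Q ^ (m + 1)) :=
  Finset.prod_range_succ _ m

lemma JF_one : JF Q 1 = 1 - Q := by simp [JF]

lemma JB_eq {m : ℕ} {r : ℤ} (h0 : 0 ≤ r) (h1 : r ≤ m) :
    JB Q m r = JF Q m / (JF Q r.toNat * JF Q (m - r.toNat)) := if_pos ⟨h0, h1⟩

lemma JB_of_neg {m : ℕ} {r : ℤ} (h : r < 0) : JB Q m r = 0 := if_neg (by omega)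

lemma JB_of_gt {m : ℕ} {r : ℤ} (h : (m : ℤ) < r) : JB Q m r = 0 := if_neg (by omega)

lemma JB_zero (hQ : ‖Q‖ < 1) (m : ℕ) : JB Q m 0 = 1 := by
  rw [JB_eq le_rfl (by positivity)]
  simp only [Int.toNat_zero, Nat.sub_zero]
  rw [show JF Q 0 = 1 from rfl, one_mul, div_self (JF_ne hQ m)]

lemma JB_self (hQ : ‖Q‖ < 1) (m : ℕ) : JB Q m m = 1 := by
  rw [JB_eq (by positivity) le_rfl]
  simp only [Int.toNat_natCast, Nat.sub_self]
  rw [show JF Q 0 = 1 from rfl, mul_one, div_self (JF_ne hQ m)]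

lemma JB_one (hQ : ‖Q‖ < 1) (m : ℕ) : JB Q m 1 = (1 - Q ^ m) / (1 - Q) := by
  cases' m with m
  · rw [JB_of_gt (by norm_num)]; simp
  · rw [JB_eq (by norm_num) (by exact_mod_cast Nat.one_le_iff_ne_zero.2 (Nat.succ_ne_zero m))]
    have h3 : (Int.toNat 1) = 1 := rfl
    rw [h3]
    have h4 : m + 1 - 1 = m := rfl
    rw [h4, JF_succ, JF_one]
    have hQ1 : (1:ℂ) - Q ≠ 0 := by simpa using one_sub_pow_ne (Q := Q) hQ 0
    field_simp [JF_ne hQ m]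

lemma JB_penult (hQ : ‖Q‖ < 1) (m : ℕ) : JB Q (m + 1) m = (1 - Q ^ (m+1)) / (1 - Q) := by
  rw [JB_eq (by positivity) (by exact_mod_cast Nat.le_succ m)]
  have h3 : ((m:ℤ).toNat) = m := by simp
  rw [h3]
  have h2 : (m + 1 - m) = 1 := by omega
  rw [h2, JF_succ, JF_one]
  have hQ1 : (1:ℂ) - Q ≠ 0 := by simpa using one_sub_pow_ne (Q := Q) hQ 0
  field_simp [JF_ne hQ m]

-- ### interior case of the Pascal-type recurrence

set_option maxHeartbeats 2000000 in
lemma interior (hQ : ‖Q‖ < 1) (a b : ℕ) :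
    JF Q (a+b+4) / (JF Q (a+2) * JF Q (b+2))
      = JF Q (a+b+2) / (JF Q (a+1) * JF Q (b+1)) * (1 + Q^(a+b+3))
        + JF Q (a+b+2) / (JF Q a * JF Q (b+2)) * Q^(b+2)
        + JF Q (a+b+2) / (JF Q (a+2) * JF Q b) * Q^(a+2) := by
  have p1 : Q^(a+1)*Q^(b+1)*Q = Q^(a+b+3) := by
    rw [← pow_add, ← pow_succ]; congr 1; omega
  have p2 : Q^(a+1)*Q^(b+1)*Q*Q = Q^(a+b+4) := by
    rw [← pow_add, ← pow_succ, ← pow_succ]; congr 1; omega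
  have e1 : JF Q (a+b+4) = JF Q (a+b+2) * (1 - Q^(a+1)*Q^(b+1)*Q) * (1 - Q^(a+1)*Q^(b+1)*Q*Q) := by
    rw [p2, p1, show a+b+4 = a+b+3+1 by omega, JF_succ, show a+b+3 = a+b+2+1 by omega, JF_succ]
  have e2 : JF Q (a+2) = JF Q a * ((1 - Q^(a+1)) * (1 - Q^(a+1)*Q)) := by
    rw [← pow_succ Q (a+1), show a+2 = (a+1)+1 by omega, JF_succ, JF_succ]
    ring
  have e3 : JF Q (b+2) = JF Q b * ((1 - Q^(b+1)) * (1 - Q^(b+1)*Q)) := by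
    rw [← pow_succ Q (b+1), show b+2 = (b+1)+1 by omega, JF_succ, JF_succ]
    ring
  have e4 : JF Q (a+1) = JF Q a * (1 - Q^(a+1)) := JF_succ a
  have e5 : JF Q (b+1) = JF Q b * (1 - Q^(b+1)) := JF_succ b
  have e6 : Q^(a+b+3) = Q^(a+1)*Q^(b+1)*Q := p1.symm
  have e7 : Q^(b+2) = Q^(b+1)*Q := by rw [show b+2 = (b+1)+1 by omega, pow_succ]
  have e8 : Q^(a+2) = Q^(a+1)*Q := by rw [show a+2 = (a+1)+1 by omega, pow_succ]
  have na := JF_ne hQ a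
  have nb := JF_ne hQ b
  have nF := JF_ne hQ (a+b+2)
  have h1 : (1:ℂ) - Q^(a+1) ≠ 0 := one_sub_pow_ne hQ a
  have h2 : (1:ℂ) - Q^(a+1)*Q ≠ 0 := by
    have := one_sub_pow_ne hQ (a+1); rwa [pow_succ] at this
  have h3 : (1:ℂ) - Q^(b+1) ≠ 0 := one_sub_pow_ne hQ b
  have h4 : (1:ℂ) - Q^(b+1)*Q ≠ 0 := by
    have := one_sub_pow_ne hQ (b+1); rwa [pow_succ] at this
  rw [e1, e2, e3, e4, e5, e6, e7, e8]
  generalize JF Q a = A at *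
  generalize JF Q b = B at *
  generalize JF Q (a+b+2) = F at *
  generalize Q^(a+1) = U at *
  generalize Q^(b+1) = V at *
  have hD : A*((1-U)*(1-U*Q)) * (B*((1-V)*(1-V*Q))) ≠ 0 := by
    exact mul_ne_zero (mul_ne_zero na (mul_ne_zero h1 h2))
      (mul_ne_zero nb (mul_ne_zero h3 h4))
  have t1 : F / (A*(1-U) * (B*(1-V))) * (1+U*V*Q)
      = F*((1+U*V*Q)*((1-U*Q)*(1-V*Q))) / (A*((1-U)*(1-U*Q)) * (B*((1-V)*(1-V*Q)))) := by
    rw [div_mul_eq_mul_div, div_eq_div_iff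
      (mul_ne_zero (mul_ne_zero na h1) (mul_ne_zero nb h3)) hD]
    ring
  have t2 : F / (A * (B*((1-V)*(1-V*Q)))) * (V*Q)
      = F*((V*Q)*((1-U)*(1-U*Q))) / (A*((1-U)*(1-U*Q)) * (B*((1-V)*(1-V*Q)))) := by
    rw [div_mul_eq_mul_div, div_eq_div_iff
      (mul_ne_zero na (mul_ne_zero nb (mul_ne_zero h3 h4))) hD]
    ring
  have t3 : F / (A*((1-U)*(1-U*Q)) * B) * (U*Q)
      = F*((U*Q)*((1-V)*(1-V*Q))) / (A*((1-U)*(1-U*Q)) * (B*((1-V)*(1-V*Q)))) := by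
    rw [div_mul_eq_mul_div, div_eq_div_iff
      (mul_ne_zero (mul_ne_zero na (mul_ne_zero h1 h2)) nb) hD]
    ring
  rw [t1, t2, t3, ← add_div, ← add_div, div_eq_div_iff hD hD]
  ring

lemma one_sub_Q_ne (hQ : ‖Q‖ < 1) : (1:ℂ) - Q ≠ 0 := by
  simpa using one_sub_pow_ne (Q := Q) hQ 0

/-- The Pascal-type recurrence for the coefficients in the finite Jacobi identity. -/
lemma star (hQ : ‖Q‖ < 1) (hQ0 : Q ≠ 0) (N : ℕ) (k : ℤ) :
    JB Q (2*N+2) k = JB Q (2*N) (k-1) * (1 + Q^(2*N+1))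
      + JB Q (2*N) (k-2) * Q^((2*N+2 : ℤ) - k) + JB Q (2*N) k * Q^k := by
  have h1Q := one_sub_Q_ne hQ
  rcases (by omega : k ≤ -1 ∨ k = 0 ∨ k = 1 ∨ (2 ≤ k ∧ k ≤ 2*N) ∨ (k = 2*N+1 ∧ 1 ≤ N)
      ∨ k = 2*N+2 ∨ 2*N+3 ≤ k) with h | h | h | ⟨h2, h3⟩ | ⟨h, hN⟩ | h | h
  · rw [JB_of_neg (by omega), JB_of_neg (by omega), JB_of_neg (by omega), JB_of_neg (by omega)]
    ring
  · subst h
    rw [JB_zero hQ, JB_of_neg (by omega), JB_of_neg (by omega), JB_zero hQ]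
    simp
  · subst h
    norm_num
    rw [JB_one hQ, JB_of_neg (show (-1:ℤ) < 0 by norm_num), JB_zero hQ, JB_one hQ]
    have e1 : Q ^ (2*N+2) = Q^(2*N) * Q * Q := by rw [pow_succ, pow_succ]
    have e2 : Q ^ (2*N+1) = Q^(2*N) * Q := by rw [pow_succ]
    rw [e1, e2]
    field_simp
    ring
  · -- interior
    obtain ⟨a, ha⟩ : ∃ a : ℕ, k = (a : ℤ) + 2 := ⟨(k-2).toNat, by omega⟩
    obtain ⟨b, hb⟩ : ∃ b : ℕ, 2*N = a + b + 2 := ⟨(2*(N:ℤ) - k).toNat, by omega⟩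
    subst ha
    have hk2 : ((a:ℤ) + 2) = ((a + 2 : ℕ) : ℤ) := by push_cast; ring
    have hk1 : ((a:ℤ) + 2 - 1) = ((a + 1 : ℕ) : ℤ) := by push_cast; ring
    have hk0 : ((a:ℤ) + 2 - 2) = ((a : ℕ) : ℤ) := by push_cast; ring
    have hz1 : ((2*N+2 : ℤ) - ((a:ℤ)+2)) = ((b + 2 : ℕ) : ℤ) := by omega
    rw [hk1, hk0, hz1, hk2, zpow_natCast, zpow_natCast,
      JB_eq (by positivity) (by omega), JB_eq (by positivity) (by omega),
      JB_eq (by positivity) (by omega), JB_eq (by positivity) (by omega)]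
    simp only [Int.toNat_natCast]
    have r1 : 2*N+2 = a+b+4 := by omega
    have r2 : a+b+4 - (a+2) = b+2 := by omega
    have r3 : 2*N - (a+1) = b+1 := by omega
    have r4 : 2*N - a = b+2 := by omega
    have r5 : 2*N - (a+2) = b := by omega
    have r6 : 2*N+1 = a+b+3 := by omega
    rw [r1, r2, r3, r4, r5, r6, show 2*N = a+b+2 from hb]
    exact interior hQ a b
  · -- k = 2N+1, N >= 1
    obtain ⟨M, rfl⟩ : ∃ M : ℕ, N = M + 1 := ⟨N-1, by omega⟩
    subst h
    have c1 : (2 * ((M+1 : ℕ) : ℤ) + 1) = ((2*M+3 : ℕ) : ℤ) := by push_cast; ring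
    have c2 : (2 * ((M+1 : ℕ) : ℤ) + 1 - 1) = ((2*M+2 : ℕ) : ℤ) := by push_cast; ring
    have c3 : (2 * ((M+1 : ℕ) : ℤ) + 1 - 2) = ((2*M+1 : ℕ) : ℤ) := by push_cast; ring
    have hz : ((2 * ((M+1:ℕ):ℤ) + 2) - ((2*M+3 : ℕ) : ℤ)) = 1 := by push_cast; ring
    rw [c3, c2, c1, hz, zpow_one]
    have l1 : JB Q (2*(M+1)+2) ((2*M+3 : ℕ) : ℤ) = (1 - Q^(2*M+4)) / (1 - Q) := by
      rw [show 2*(M+1)+2 = (2*M+3)+1 by omega, JB_penult hQ,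
        show 2*M+3+1 = 2*M+4 by omega]
    have l2 : JB Q (2*(M+1)) ((2*M+2 : ℕ) : ℤ) = 1 := by
      rw [show 2*(M+1) = 2*M+2 by omega, JB_self hQ]
    have l3 : JB Q (2*(M+1)) ((2*M+1 : ℕ) : ℤ) = (1 - Q^(2*M+2)) / (1 - Q) := by
      rw [show 2*(M+1) = (2*M+1)+1 by omega, JB_penult hQ, show 2*M+1+1 = 2*M+2 by omega]
    have l4 : JB Q (2*(M+1)) ((2*M+3 : ℕ) : ℤ) = 0 := JB_of_gt (by push_cast; omega)
    rw [l1, l2, l3, l4]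
    have e1 : Q ^ (2*M+4) = Q^(2*M+2) * Q * Q := by rw [pow_succ, pow_succ]
    have e2 : Q ^ (2*(M+1)+1) = Q^(2*M+2) * Q := by
      rw [show 2*(M+1)+1 = (2*M+2)+1 by omega, pow_succ]
    rw [e1, e2]
    field_simp
    ring
  · subst h
    have c1 : (2*N+2 : ℤ) = ((2*N+2 : ℕ) : ℤ) := by push_cast; ring
    have c2 : (2*N+2-1 : ℤ) = ((2*N+1 : ℕ) : ℤ) := by push_cast; ring
    have c3 : (2*N+2-2 : ℤ) = ((2*N : ℕ) : ℤ) := by push_cast; ring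
    rw [c3, c2, c1]
    have l1 : JB Q (2*N+2) ((2*N+2 : ℕ) : ℤ) = 1 := JB_self hQ _
    have l2 : JB Q (2*N) ((2*N+1 : ℕ) : ℤ) = 0 := JB_of_gt (by push_cast; omega)
    have l3 : JB Q (2*N) ((2*N : ℕ) : ℤ) = 1 := JB_self hQ _
    have l4 : JB Q (2*N) ((2*N+2 : ℕ) : ℤ) = 0 := JB_of_gt (by push_cast; omega)
    rw [l1, l2, l3, l4]
    rw [sub_self, zpow_zero]
    ring
  · rw [JB_of_gt (by omega), JB_of_gt (by omega), JB_of_gt (by omega), JB_of_gt (by omega)]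
    ring

-- ## The finite Jacobi identity

/-- Summand of the finite Jacobi product identity. -/
noncomputable def jf (q w : ℂ) (N : ℕ) (n : ℤ) : ℂ :=
  JB (q^2) (2*N) ((N : ℤ) + n) * q^(n^2) * w^n

variable {q w : ℂ}

lemma normsq_lt (hq : ‖q‖ < 1) : ‖q^2‖ < 1 := by
  rw [norm_pow]
  exact pow_lt_one₀ (norm_nonneg q) hq two_ne_zero

lemma jf_eq_zero (hq : ‖q‖ < 1) {N : ℕ} {n : ℤ} (hn : n ∉ Finset.Icc (-(N:ℤ)) N) :
    jf q w N n = 0 := by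
  simp only [Finset.mem_Icc, not_and_or, not_le] at hn
  unfold jf
  rcases hn with h | h
  · rw [JB_of_neg (by omega)]; ring
  · rw [JB_of_gt (by push_cast; omega)]; ring

lemma jf_summable (hq : ‖q‖ < 1) (N : ℕ) : Summable (jf q w N) :=
  summable_of_ne_finset_zero (s := Finset.Icc (-(N:ℤ)) N) (fun _ hn => jf_eq_zero hq hn)

lemma q2z (m : ℤ) : ((q^2 : ℂ))^m = q^(2*m) := by
  rw [← zpow_natCast q 2, ← zpow_mul]
  norm_num

lemma jf_step (hq : ‖q‖ < 1) (hq0 : q ≠ 0) (hw : w ≠ 0) (N : ℕ) (n : ℤ) :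
    jf q w (N+1) n = (1 + q^(4*N+2)) * jf q w N n
      + (q^(2*N+1) * w) * jf q w N (n-1) + (q^(2*N+1) * w⁻¹) * jf q w N (n+1) := by
  have hQ : ‖q^2‖ < 1 := normsq_lt hq
  have hQ0 : (q^2 : ℂ) ≠ 0 := pow_ne_zero 2 hq0
  have hs := star hQ hQ0 N ((N:ℤ)+1+n)
  unfold jf
  rw [show (2*(N+1)) = 2*N+2 by omega, show ((N+1 : ℕ) : ℤ) + n = (N:ℤ)+1+n by push_cast; ring,
    hs, show ((N:ℤ)+1+n-1 : ℤ) = (N:ℤ) + n by ring,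
    show ((N:ℤ)+1+n-2 : ℤ) = (N:ℤ) + (n-1) by ring,
    show ((2*N+2 : ℤ) - ((N:ℤ)+1+n)) = (N:ℤ)+1-n by push_cast; ring,
    show ((N:ℤ)+1+n : ℤ) = (N:ℤ) + (n+1) by ring]
  have hp1 : ((q^2:ℂ))^(2*N+1) = q^(4*N+2) := by
    rw [← pow_mul, show 2*(2*N+1) = 4*N+2 by omega]
  have t2 : ((q^2:ℂ))^((N:ℤ)+1-n) * (q^(n^2) * w^n)
      = (q^(2*N+1) * w) * (q^((n-1)^2) * w^(n-1)) := by
    rw [q2z, ← mul_assoc, ← zpow_add₀ hq0, ← zpow_natCast q (2*N+1)]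
    have r1 : q^(((2*N+1:ℕ)):ℤ) * w * (q^((n-1)^2) * w^(n-1))
        = (q^((((2*N+1:ℕ)):ℤ) + (n-1)^2)) * (w^(1+(n-1))) := by
      rw [zpow_add₀ hw 1 (n-1), zpow_add₀ hq0, zpow_one]; ring
    rw [r1]
    congr 1
    · congr 1
      push_cast; ring
    · congr 1
      ring
  have t3 : ((q^2:ℂ))^((N:ℤ)+(n+1)) * (q^(n^2) * w^n)
      = (q^(2*N+1) * w⁻¹) * (q^((n+1)^2) * w^(n+1)) := by
    rw [q2z, ← mul_assoc, ← zpow_add₀ hq0, ← zpow_natCast q (2*N+1)]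
    have r1 : q^(((2*N+1:ℕ)):ℤ) * w⁻¹ * (q^((n+1)^2) * w^(n+1))
        = (q^((((2*N+1:ℕ)):ℤ) + (n+1)^2)) * (w^((-1)+(n+1))) := by
      rw [zpow_add₀ hw (-1) (n+1), zpow_add₀ hq0, zpow_neg_one]; ring
    rw [r1]
    congr 1
    · congr 1
      push_cast; ring
    · congr 1
      ring
  rw [hp1] at *
  calc (JB (q^2) (2*N) ((N:ℤ)+n) * (1 + q^(4*N+2))
        + JB (q^2) (2*N) ((N:ℤ)+(n-1)) * (q^2)^((N:ℤ)+1-n)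
        + JB (q^2) (2*N) ((N:ℤ)+(n+1)) * (q^2)^((N:ℤ)+(n+1))) * q^(n^2) * w^n
      = JB (q^2) (2*N) ((N:ℤ)+n) * (1 + q^(4*N+2)) * (q^(n^2) * w^n)
        + JB (q^2) (2*N) ((N:ℤ)+(n-1)) * ((q^2)^((N:ℤ)+1-n) * (q^(n^2) * w^n))
        + JB (q^2) (2*N) ((N:ℤ)+(n+1)) * ((q^2)^((N:ℤ)+(n+1)) * (q^(n^2) * w^n)) := by ring
    _ = _ := by rw [t2, t3]; ring

lemma fin_id (hq : ‖q‖ < 1) (hq0 : q ≠ 0) (hw : w ≠ 0) (N : ℕ) :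
    ∏ j ∈ Finset.range N, ((1 + q^(2*j+1) * w) * (1 + q^(2*j+1) * w⁻¹))
      = ∑' n : ℤ, jf q w N n := by
  have hQ : ‖q^2‖ < 1 := normsq_lt hq
  induction N with
  | zero =>
    rw [Finset.prod_range_zero, tsum_eq_single 0 (fun n hn => jf_eq_zero hq (by simp [hn]))]
    unfold jf
    rw [show (2*0) = 0 by omega, show ((0:ℕ):ℤ) + 0 = 0 by norm_num, JB_zero hQ]
    norm_num
  | succ N ih =>
    rw [Finset.prod_range_succ, ih]
    have hsum := jf_summable (w := w) hq N
    have hsA : Summable (fun n : ℤ => (1 + q^(4*N+2)) * jf q w N n) := hsum.mul_left _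
    have hsB : Summable (fun n : ℤ => (q^(2*N+1) * w) * jf q w N (n-1)) := by
      apply Summable.mul_left
      have h := (Equiv.summable_iff (Equiv.subRight (1:ℤ)) (f := jf q w N)).2 hsum
      simpa [Function.comp_def] using h
    have hsC : Summable (fun n : ℤ => (q^(2*N+1) * w⁻¹) * jf q w N (n+1)) := by
      apply Summable.mul_left
      have h := (Equiv.summable_iff (Equiv.addRight (1:ℤ)) (f := jf q w N)).2 hsum
      simpa [Function.comp_def] using h
    have key : ∑' n : ℤ, jf q w (N+1) n
        = ((1 + q^(4*N+2)) * ∑' n : ℤ, jf q w N n)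
          + ((q^(2*N+1) * w) * ∑' n : ℤ, jf q w N n)
          + ((q^(2*N+1) * w⁻¹) * ∑' n : ℤ, jf q w N n) := by
      rw [← tsum_mul_left, ← tsum_mul_left, ← tsum_mul_left]
      have eB := (Equiv.subRight (1:ℤ)).tsum_eq (fun n => (q^(2*N+1) * w) * jf q w N n)
      simp only [Equiv.subRight_apply] at eB
      have eC := (Equiv.addRight (1:ℤ)).tsum_eq (fun n => (q^(2*N+1) * w⁻¹) * jf q w N n)
      simp only [Equiv.coe_addRight] at eC
      rw [← eB, ← eC]
      rw [← hsA.tsum_add hsB, ← (hsA.add hsB).tsum_add hsC]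
      exact tsum_congr (fun n => by rw [jf_step hq hq0 hw N n])
    rw [key, show (4*N+2) = (2*N+1)+(2*N+1) by omega, pow_add]
    have hww : w * w⁻¹ = 1 := mul_inv_cancel₀ hw
    generalize (∑' n : ℤ, jf q w N n) = T
    linear_combination (q^(2*N+1) * q^(2*N+1) * T) * hww

-- ## Infinite products of `1 + aₖ`

lemma log_summ {a : ℕ → ℂ} (ha : Summable fun k => ‖a k‖) :
    Summable (fun k => Complex.log (1 + a k)) := by
  have h0 : Tendsto (fun k => ‖a k‖) atTop (𝓝 0) := ha.tendsto_atTop_zero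
  apply Summable.of_norm_bounded_eventually_nat (g := fun k => 3/2 * ‖a k‖) (ha.mul_left _)
  filter_upwards [h0.eventually_le_const (by norm_num : (0:ℝ) < 1/2)] with k hk
  exact Complex.norm_log_one_add_half_le_self hk

lemma mult_of_summable {a : ℕ → ℂ} (ha : Summable fun k => ‖a k‖) :
    Multipliable (fun k => 1 + a k) := by
  by_cases hz : ∀ k, 1 + a k ≠ 0
  · exact Complex.multipliable_of_summable_log (log_summ ha)
  · push_neg at hz
    obtain ⟨k₀, hk₀⟩ := hz
    refine ⟨0, ?_⟩
    have hev : ∀ᶠ s : Finset ℕ in atTop, (0:ℂ) = ∏ i ∈ s, (1 + a i) := by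
      filter_upwards [eventually_ge_atTop {k₀}] with s hs
      exact (Finset.prod_eq_zero (hs (Finset.mem_singleton_self k₀)) hk₀).symm
    exact Tendsto.congr' hev tendsto_const_nhds

lemma tprod_ne_of_summable {a : ℕ → ℂ} (ha : Summable fun k => ‖a k‖)
    (hz : ∀ k, 1 + a k ≠ 0) : (∏' k, (1 + a k)) ≠ 0 := by
  have h2 : Complex.exp (∑' k, Complex.log (1 + a k)) = ∏' k, (1 + a k) :=
    Complex.cexp_tsum_eq_tprod (f := fun k => 1 + a k) hz (log_summ ha)
  rw [← h2]
  exact Complex.exp_ne_zero _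

-- ## The abstract Jacobi triple product

theorem triple_product (q w : ℂ) (hq : ‖q‖ < 1) (hq0 : q ≠ 0) (hw : w ≠ 0) :
    ∑' n : ℤ, q^(n^2) * w^n
      = (∏' k : ℕ, (1 - (q^2)^(k+1)))
        * ∏' k : ℕ, ((1 + q^(2*k+1) * w) * (1 + q^(2*k+1) * w⁻¹)) := by
  have hQ : ‖q^2‖ < 1 := normsq_lt hq
  have hQ0 : (q^2:ℂ) ≠ 0 := pow_ne_zero _ hq0
  have hqn : (0:ℝ) < ‖q‖ := norm_pos_iff.2 hq0
  have hq2 : ‖q‖^2 < 1 := by rw [← norm_pow]; exact hQ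
  have hq2nn : (0:ℝ) ≤ ‖q‖^2 := by positivity
  -- geometric summability
  have hgeoE : Summable (fun k : ℕ => ‖-((q^2:ℂ)^(k+1))‖) := by
    refine ((summable_geometric_of_lt_one (norm_nonneg (q^2)) hQ).mul_left ‖q^2‖).congr
      fun k => ?_
    rw [norm_neg, ← pow_succ']; simp [norm_pow]
  have hgeo1 : Summable (fun k : ℕ => ‖q^(2*k+1) * w‖) := by
    refine ((summable_geometric_of_lt_one hq2nn hq2).mul_right (‖q‖ * ‖w‖)).congr fun k => ?_
    rw [norm_mul, norm_pow, pow_add, pow_mul, pow_one, mul_assoc]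
  have hgeo2 : Summable (fun k : ℕ => ‖q^(2*k+1) * w⁻¹‖) := by
    refine ((summable_geometric_of_lt_one hq2nn hq2).mul_right (‖q‖ * ‖w⁻¹‖)).congr fun k => ?_
    rw [norm_mul, norm_pow, pow_add, pow_mul, pow_one, mul_assoc]
  -- the eta-type product
  have hmultE : Multipliable (fun k : ℕ => 1 - (q^2:ℂ)^(k+1)) :=
    (mult_of_summable hgeoE).congr fun k => by ring
  set E := ∏' k : ℕ, (1 - (q^2:ℂ)^(k+1)) with hEdef
  have hEne : E ≠ 0 := by
    have h1 := tprod_ne_of_summable hgeoE (fun k => by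
      have := one_sub_pow_ne hQ k
      intro h; apply this; rw [← h]; ring)
    have heq : ∏' k : ℕ, (1 + -((q^2:ℂ)^(k+1))) = E := tprod_congr (fun k => by ring)
    rwa [heq] at h1
  have hJF : Tendsto (fun m => JF (q^2) m) atTop (𝓝 E) := by
    have h := hmultE.hasProd.tendsto_prod_nat
    exact h
  have hJFinv : Tendsto (fun m => (JF (q^2) m)⁻¹) atTop (𝓝 E⁻¹) := hJF.inv₀ hEne
  -- uniform bound on the Gaussian binomials
  obtain ⟨C1, hC1⟩ : ∃ C1, ∀ m, ‖JF (q^2) m‖ ≤ C1 := by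
    obtain ⟨C, hC⟩ := hJF.norm.bddAbove_range
    exact ⟨C, fun m => hC (Set.mem_range_self m)⟩
  obtain ⟨C2, hC2⟩ : ∃ C2, ∀ m, ‖(JF (q^2) m)⁻¹‖ ≤ C2 := by
    obtain ⟨C, hC⟩ := hJFinv.norm.bddAbove_range
    exact ⟨C, fun m => hC (Set.mem_range_self m)⟩
  have hC1nn : 0 ≤ C1 := le_trans (norm_nonneg _) (hC1 0)
  have hC2nn : 0 ≤ C2 := le_trans (norm_nonneg _) (hC2 0)
  set C := C1 * (C2 * C2) with hCdef
  have hCnn : 0 ≤ C := by positivity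
  have hJBbound : ∀ (m : ℕ) (r : ℤ), ‖JB (q^2) m r‖ ≤ C := by
    intro m r
    by_cases h : 0 ≤ r ∧ r ≤ m
    · rw [JB_eq h.1 h.2, div_eq_mul_inv, mul_inv, norm_mul, norm_mul]
      exact mul_le_mul (hC1 m)
        (mul_le_mul (hC2 _) (hC2 _) (norm_nonneg _) hC2nn)
        (by positivity) hC1nn
    · rw [JB, if_neg h, norm_zero]
      exact hCnn
  -- majorant summability
  have hnat : ∀ (r : ℝ), 0 < r → Summable (fun n : ℕ => ‖q‖^(n^2) * r^n) := by
    intro r hr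
    apply summable_of_ratio_test_tendsto_lt_one (l := 0) one_pos
    · exact Eventually.of_forall fun n => by positivity
    · have hrat : ∀ n : ℕ, ‖(‖q‖^((n+1)^2) * r^(n+1))‖ / ‖(‖q‖^(n^2) * r^n)‖
          = (‖q‖^2)^n * (‖q‖ * r) := by
        intro n
        rw [Real.norm_of_nonneg (by positivity), Real.norm_of_nonneg (by positivity),
          div_eq_iff (ne_of_gt (by positivity)),
          show (n+1)^2 = n^2 + (2*n+1) by ring, pow_add,
          show (2*n+1) = 2*n+1 by rfl, pow_add (‖q‖) (2*n) 1, pow_mul, pow_one, pow_succ]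
        ring
      have h0 : Tendsto (fun n : ℕ => (‖q‖^2)^n * (‖q‖ * r)) atTop (𝓝 (0 * (‖q‖ * r))) :=
        (tendsto_pow_atTop_nhds_zero_of_lt_one hq2nn hq2).mul_const _
      rw [zero_mul] at h0
      exact h0.congr (fun n => (hrat n).symm)
  have hmajcore : Summable (fun n : ℤ => ‖q^(n^2) * w^n‖) := by
    have hwn : (0:ℝ) < ‖w‖ := norm_pos_iff.2 hw
    have hwi : (0:ℝ) < ‖w⁻¹‖ := norm_pos_iff.2 (inv_ne_zero hw)
    apply Summable.of_nat_of_neg_add_one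
    · refine (hnat ‖w‖ hwn).congr fun n => ?_
      rw [norm_mul, norm_zpow, norm_zpow,
        show (((n:ℕ):ℤ))^2 = ((n^2:ℕ):ℤ) by push_cast; ring, zpow_natCast, zpow_natCast]
    · refine ((summable_nat_add_iff 1).2 (hnat ‖w⁻¹‖ hwi)).congr fun n => ?_
      rw [norm_mul, norm_zpow, norm_zpow,
        show ((-(((n:ℕ):ℤ)+1))^2) = (((n+1)^2:ℕ):ℤ) by push_cast; ring, zpow_natCast,
        show (-(((n:ℕ):ℤ)+1)) = -(((n+1:ℕ):ℤ)) by push_cast; ring,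
        zpow_neg, zpow_natCast, norm_inv, inv_pow]
  have hmaj : Summable (fun n : ℤ => C * ‖q^(n^2) * w^n‖) := hmajcore.mul_left C
  -- pointwise limits of the summands
  have hpt : ∀ n : ℤ, Tendsto (fun N : ℕ => jf q w N n) atTop (𝓝 (E⁻¹ * (q^(n^2) * w^n))) := by
    intro n
    have h2N : Tendsto (fun N : ℕ => 2*N) atTop atTop :=
      tendsto_atTop_atTop_of_monotone (fun _ _ h => by omega) (fun b => ⟨b, by omega⟩)
    have haN : Tendsto (fun N : ℕ => ((N:ℤ) + n).toNat) atTop atTop :=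
      tendsto_atTop_atTop_of_monotone (fun _ _ h => by omega) (fun b => ⟨b + n.natAbs, by omega⟩)
    have hbN : Tendsto (fun N : ℕ => 2*N - ((N:ℤ)+n).toNat) atTop atTop :=
      tendsto_atTop_atTop_of_monotone (fun _ _ h => by omega) (fun b => ⟨b + n.natAbs, by omega⟩)
    have hconv : Tendsto (fun N : ℕ => JF (q^2) (2*N)
        * ((JF (q^2) (((N:ℤ)+n).toNat))⁻¹ * (JF (q^2) (2*N - ((N:ℤ)+n).toNat))⁻¹))
        atTop (𝓝 (E * (E⁻¹ * E⁻¹))) :=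
      (hJF.comp h2N).mul ((hJFinv.comp haN).mul (hJFinv.comp hbN))
    have hev : ∀ᶠ N : ℕ in atTop, JF (q^2) (2*N)
        * ((JF (q^2) (((N:ℤ)+n).toNat))⁻¹ * (JF (q^2) (2*N - ((N:ℤ)+n).toNat))⁻¹)
        = JB (q^2) (2*N) ((N:ℤ)+n) := by
      filter_upwards [eventually_ge_atTop n.natAbs] with N hN
      rw [JB_eq (by omega) (by push_cast; omega), div_eq_mul_inv, mul_inv]
    have hJBlim : Tendsto (fun N => JB (q^2) (2*N) ((N:ℤ)+n)) atTop (𝓝 (E * (E⁻¹ * E⁻¹))) :=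
      Tendsto.congr' hev hconv
    have hval : E * (E⁻¹ * E⁻¹) = E⁻¹ := by field_simp
    rw [hval] at hJBlim
    refine (hJBlim.mul_const (q^(n^2) * w^n)).congr fun N => ?_
    unfold jf; ring
  -- dominated convergence
  have hbd : ∀ᶠ N : ℕ in atTop, ∀ n : ℤ, ‖jf q w N n‖ ≤ C * ‖q^(n^2) * w^n‖ := by
    apply Eventually.of_forall
    intro N n
    unfold jf
    rw [mul_assoc, norm_mul]
    exact mul_le_mul_of_nonneg_right (hJBbound _ _) (norm_nonneg _)
  have hT := tendsto_tsum_of_dominated_convergence hmaj hpt hbd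
  -- product side
  have hmP : Multipliable (fun k : ℕ => (1 + q^(2*k+1) * w) * (1 + q^(2*k+1) * w⁻¹)) :=
    (mult_of_summable hgeo1).mul (mult_of_summable hgeo2)
  have hP := hmP.hasProd.tendsto_prod_nat
  have hPS : Tendsto (fun N : ℕ => ∑' n : ℤ, jf q w N n) atTop
      (𝓝 (∏' k : ℕ, ((1 + q^(2*k+1) * w) * (1 + q^(2*k+1) * w⁻¹)))) :=
    hP.congr (fun N => fin_id hq hq0 hw N)
  have huniq := tendsto_nhds_unique hT hPS
  rw [tsum_mul_left] at huniq
  have hfin := congrArg (fun z => E * z) huniq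
  rw [← mul_assoc, mul_inv_cancel₀ hEne, one_mul] at hfin
  exact hfin
end JTP

open JTP in
/-- Jacobi triple product in characteristic form:
`∑_{n∈ℤ} e^{iπ(n+α)²τ} e^{2πi(n+α)β}
  = η(τ) e^{2πiαβ} q^{α²/2 − 1/24}
    ∏_{k≥1} (1 + q^{k+α−1/2} e^{2πiβ})(1 + q^{k−α−1/2} e^{−2πiβ})`. -/
theorem stmt_19 (τ : ℂ) (hτ : 0 < τ.im) (α β : ℝ) :
    (∑' n : ℤ, Complex.exp ((Real.pi : ℂ) * Complex.I * (((n : ℝ) + α : ℝ) : ℂ) ^ 2 * τ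
        + 2 * (Real.pi : ℂ) * Complex.I * (((n : ℝ) + α : ℝ) : ℂ) * (β : ℂ)))
      = dedekindEta τ * Complex.exp (2 * (Real.pi : ℂ) * Complex.I * (α : ℂ) * (β : ℂ))
        * qpow τ (α ^ 2 / 2 - 1 / 24)
        * ∏' k : ℕ,
            ((1 + qpow τ (((k : ℝ) + 1) + α - 1 / 2)
                * Complex.exp (2 * (Real.pi : ℂ) * Complex.I * (β : ℂ)))
              * (1 + qpow τ (((k : ℝ) + 1) - α - 1 / 2)
                * Complex.exp (-2 * (Real.pi : ℂ) * Complex.I * (β : ℂ)))) := by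
  set πc : ℂ := (Real.pi : ℂ) with hπc
  set q : ℂ := Complex.exp (πc * Complex.I * τ) with hqdef
  set w : ℂ := Complex.exp (2 * πc * Complex.I * ((α : ℂ) * τ + (β : ℂ))) with hwdef
  set Cα : ℂ := Complex.exp (πc * Complex.I * (α:ℂ)^2 * τ + 2 * πc * Complex.I * (α:ℂ) * (β:ℂ))
    with hCadef
  have hre : (πc * Complex.I * τ).re = -(Real.pi * τ.im) := by
    simp [hπc, Complex.mul_re, Complex.mul_im]
  have hq : ‖q‖ < 1 := by
    rw [hqdef, Complex.norm_exp, hre, Real.exp_lt_one_iff]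
    have := Real.pi_pos
    nlinarith
  have hq0 : q ≠ 0 := Complex.exp_ne_zero _
  have hw0 : w ≠ 0 := Complex.exp_ne_zero _
  -- left side
  have hterm : ∀ n : ℤ, Complex.exp (πc * Complex.I * (((n : ℝ) + α : ℝ) : ℂ) ^ 2 * τ
        + 2 * πc * Complex.I * (((n : ℝ) + α : ℝ) : ℂ) * (β : ℂ))
      = Cα * (q^(n^2) * w^n) := by
    intro n
    rw [show q^(n^2) = Complex.exp (((n^2 : ℤ) : ℂ) * (πc * Complex.I * τ)) from
        (Complex.exp_int_mul _ _).symm,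
      show w^n = Complex.exp ((n : ℂ) * (2 * πc * Complex.I * ((α : ℂ) * τ + (β : ℂ)))) from
        (Complex.exp_int_mul _ _).symm,
      hCadef, ← Complex.exp_add, ← Complex.exp_add]
    congr 1
    push_cast
    ring
  have hL : (∑' n : ℤ, Complex.exp (πc * Complex.I * (((n : ℝ) + α : ℝ) : ℂ) ^ 2 * τ
        + 2 * πc * Complex.I * (((n : ℝ) + α : ℝ) : ℂ) * (β : ℂ)))
      = Cα * ∑' n : ℤ, q^(n^2) * w^n := by
    rw [← tsum_mul_left]
    exact tsum_congr hterm
  -- eta product factors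
  have hEfac : ∀ k : ℕ, 1 - qpow τ ((k : ℝ) + 1) = 1 - ((q^2 : ℂ))^(k+1) := by
    intro k
    congr 1
    rw [show (q^2 : ℂ) = Complex.exp (2 * (πc * Complex.I * τ)) by
        rw [hqdef, ← Complex.exp_nat_mul]; norm_num,
      ← Complex.exp_nat_mul, qpow]
    congr 1
    push_cast
    ring
  have hfac1 : ∀ k : ℕ, 1 + qpow τ (((k : ℝ) + 1) + α - 1 / 2)
        * Complex.exp (2 * πc * Complex.I * (β : ℂ)) = 1 + q^(2*k+1) * w := by
    intro k
    congr 1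
    rw [show q^(2*k+1) = Complex.exp (((2*k+1 : ℕ) : ℂ) * (πc * Complex.I * τ)) from
        (Complex.exp_nat_mul _ _).symm,
      hwdef, qpow, ← Complex.exp_add, ← Complex.exp_add]
    congr 1
    push_cast
    ring
  have hfac2 : ∀ k : ℕ, 1 + qpow τ (((k : ℝ) + 1) - α - 1 / 2)
        * Complex.exp (-2 * πc * Complex.I * (β : ℂ)) = 1 + q^(2*k+1) * w⁻¹ := by
    intro k
    congr 1
    rw [show q^(2*k+1) = Complex.exp (((2*k+1 : ℕ) : ℂ) * (πc * Complex.I * τ)) from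
        (Complex.exp_nat_mul _ _).symm,
      hwdef, ← Complex.exp_neg, qpow, ← Complex.exp_add, ← Complex.exp_add]
    congr 1
    push_cast
    ring
  -- constants
  have hconst : qpow τ (1 / 24) * Complex.exp (2 * πc * Complex.I * (α : ℂ) * (β : ℂ))
      * qpow τ (α ^ 2 / 2 - 1 / 24) = Cα := by
    rw [qpow, qpow, hCadef, ← Complex.exp_add, ← Complex.exp_add]
    congr 1
    push_cast
    ring
  rw [hL, triple_product q w hq hq0 hw0, dedekindEta]
  rw [tprod_congr hEfac,
    show (∏' k : ℕ, ((1 + qpow τ (((k : ℝ) + 1) + α - 1 / 2)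
          * Complex.exp (2 * πc * Complex.I * (β : ℂ)))
        * (1 + qpow τ (((k : ℝ) + 1) - α - 1 / 2)
          * Complex.exp (-2 * πc * Complex.I * (β : ℂ)))))
      = ∏' k : ℕ, ((1 + q^(2*k+1) * w) * (1 + q^(2*k+1) * w⁻¹)) from
      tprod_congr (fun k => by rw [hfac1 k, hfac2 k])]
  rw [← hconst]
  ring
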